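/- Let H = [H_X | O] be an m×2n matrix over 𝔽₂ of full row rank m whose last n columns are zero, let s ∈ 𝔽₂^m, and let ε be a real number with 0 < ε ≤ 3/4 and (ε/3)/(1−ε) < 2^{−m}. For w ∈ 𝔽₂^{2n}, set α_w = ∑_{u ∈ w + Row(H)} (ε/3)^{gw(u)} (1−ε)^{n−gw(u)}. Suppose v = (x|z) satisfies v Λ Hᵀ = s and maximizes α_w among all w with w Λ Hᵀ = s. Then e' := (0|z) satisfies e' Λ Hᵀ = s and gw(e') = min{gw(u) : u ∈ 𝔽₂^{2n}, u Λ Hᵀ = s}; i.e., e' is a maximum-likelihood solution. -/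

import Mathlib

open Matrix Finset

/-- The `2n × 2n` symplectic form matrix `Λ = [[O,I],[I,O]]` over `𝔽₂`. -/
def Lam (n : ℕ) : Matrix (Fin n ⊕ Fin n) (Fin n ⊕ Fin n) (ZMod 2) :=
  Matrix.fromBlocks 0 1 1 0

/-- The syndrome `e Λ Hᵀ ∈ 𝔽₂^m` of `e ∈ 𝔽₂^{2n}` with respect to `H`. -/
def syndrome {m n : ℕ} (H : Matrix (Fin m) (Fin n ⊕ Fin n) (ZMod 2))
    (e : Fin n ⊕ Fin n → ZMod 2) : Fin m → ZMod 2 :=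
  Matrix.vecMul (Matrix.vecMul e (Lam n)) Hᵀ

/-- Generalized weight of `(x|z)`: `w_H(x) + w_H(z) − w_H(x∧z)`. -/
def gw {n : ℕ} (x z : Fin n → ZMod 2) : ℕ :=
  hammingNorm x + hammingNorm z - hammingNorm (x * z)

/-- Generalized weight of a full vector `e = (x|z) ∈ 𝔽₂^{2n}`. -/
def gwFull {n : ℕ} (e : Fin n ⊕ Fin n → ZMod 2) : ℕ :=
  gw (fun j => e (Sum.inl j)) (fun j => e (Sum.inr j))

/-- The coset `v + Row(H)` of the row space of `H`, as a finite set. -/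
def cosetF {m n : ℕ} (H : Matrix (Fin m) (Fin n ⊕ Fin n) (ZMod 2))
    (v : Fin n ⊕ Fin n → ZMod 2) : Finset (Fin n ⊕ Fin n → ZMod 2) :=
  Finset.image (fun c : Fin m → ZMod 2 => v + Matrix.vecMul c H) Finset.univ

/-- The coset probability `α_w = ∑_{u ∈ w + Row(H)} (ε/3)^{gw(u)} (1−ε)^{n−gw(u)}`. -/
noncomputable def alpha {m n : ℕ} (H : Matrix (Fin m) (Fin n ⊕ Fin n) (ZMod 2))
    (ε : ℝ) (w : Fin n ⊕ Fin n → ZMod 2) : ℝ :=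
  ∑ u ∈ cosetF H w, (ε / 3) ^ gwFull u * (1 - ε) ^ (n - gwFull u)

lemma vecMul_Lam {n : ℕ} (e : Fin n ⊕ Fin n → ZMod 2) :
    Matrix.vecMul e (Lam n) = Sum.elim (fun j => e (Sum.inr j)) (fun j => e (Sum.inl j)) := by
  funext k
  cases k with
  | inl j =>
    simp [Matrix.vecMul, dotProduct, Lam, Matrix.fromBlocks,
      Fintype.sum_sum_type, Matrix.one_apply]
  | inr j =>
    simp [Matrix.vecMul, dotProduct, Lam, Matrix.fromBlocks,
      Fintype.sum_sum_type, Matrix.one_apply]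

lemma syndrome_apply {m n : ℕ} (H : Matrix (Fin m) (Fin n ⊕ Fin n) (ZMod 2))
    (hO : ∀ i j, H i (Sum.inr j) = 0) (e : Fin n ⊕ Fin n → ZMod 2) (i : Fin m) :
    syndrome H e i = ∑ j, e (Sum.inr j) * H i (Sum.inl j) := by
  rw [syndrome, vecMul_Lam]
  simp [Matrix.vecMul, dotProduct, Fintype.sum_sum_type, hO]

lemma syndrome_eq_of_inr {m n : ℕ} (H : Matrix (Fin m) (Fin n ⊕ Fin n) (ZMod 2))
    (hO : ∀ i j, H i (Sum.inr j) = 0) (e e' : Fin n ⊕ Fin n → ZMod 2)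
    (h : ∀ j, e (Sum.inr j) = e' (Sum.inr j)) : syndrome H e = syndrome H e' := by
  funext i
  rw [syndrome_apply H hO, syndrome_apply H hO]
  exact Finset.sum_congr rfl fun j _ => by rw [h j]

lemma hn_mul_le {n : ℕ} (x z : Fin n → ZMod 2) : hammingNorm (x * z) ≤ hammingNorm x := by
  apply Finset.card_le_card
  intro i hi
  simp only [mem_filter, mem_univ, true_and] at *
  exact fun h => hi (by simp [Pi.mul_apply, h])

lemma gw_ge {n : ℕ} (x z : Fin n → ZMod 2) : hammingNorm z ≤ gw x z := by
  have := hn_mul_le x z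
  unfold gw; omega

lemma gw_le {n : ℕ} (x z : Fin n → ZMod 2) : gw x z ≤ n := by
  unfold gw
  set A := Finset.filter (fun i => x i ≠ 0) univ with hA
  set B := Finset.filter (fun i => z i ≠ 0) univ with hB
  have hinter : A ∩ B = Finset.filter (fun i => (x * z) i ≠ 0) univ := by
    ext i
    simp only [hA, hB, Finset.mem_inter, mem_filter, mem_univ, true_and, Pi.mul_apply,
      mul_ne_zero_iff]
  have h1 : A.card + B.card = (A ∪ B).card + (A ∩ B).card :=
    (Finset.card_union_add_card_inter A B).symm
  have h2 : (A ∪ B).card ≤ n := by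
    simpa using Finset.card_le_card (Finset.subset_univ (A ∪ B))
  have h3 : hammingNorm x = A.card := rfl
  have h4 : hammingNorm z = B.card := rfl
  have h5 : hammingNorm (x * z) = (A ∩ B).card := by rw [hinter]; rfl
  omega

lemma gw_zero_left {n : ℕ} (z : Fin n → ZMod 2) : gw 0 z = hammingNorm z := by
  simp [gw, hammingNorm_zero, zero_mul]

lemma gwFull_zero_left {n : ℕ} (z : Fin n → ZMod 2) :
    gwFull (Sum.elim (0 : Fin n → ZMod 2) z) = hammingNorm z :=
  gw_zero_left z

lemma mem_coset_inr {m n : ℕ} {H : Matrix (Fin m) (Fin n ⊕ Fin n) (ZMod 2)}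
    (hO : ∀ i j, H i (Sum.inr j) = 0) {v u : Fin n ⊕ Fin n → ZMod 2}
    (hu : u ∈ cosetF H v) : ∀ j, u (Sum.inr j) = v (Sum.inr j) := by
  intro j
  obtain ⟨c, -, rfl⟩ := Finset.mem_image.mp hu
  simp [Matrix.vecMul, dotProduct, hO]

lemma self_mem_coset {m n : ℕ} (H : Matrix (Fin m) (Fin n ⊕ Fin n) (ZMod 2))
    (v : Fin n ⊕ Fin n → ZMod 2) : v ∈ cosetF H v := by
  refine Finset.mem_image.mpr ⟨0, Finset.mem_univ _, ?_⟩
  simp [Matrix.zero_vecMul]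

/-- correctness of the reduction from QMLD to QMEPD: let
`H = [H_X | O]` have full row rank `m`, let `0 < ε ≤ 3/4` with
`(ε/3)/(1−ε) < 2^{-m}`.  If `v = (x|z)` satisfies `v Λ Hᵀ = s` and maximizes
`α_w` among all solutions `w` of `w Λ Hᵀ = s`, then `e' = (0|z)` satisfies
`e' Λ Hᵀ = s` and `gw(e') = min {gw(u) : u Λ Hᵀ = s}`. -/
theorem qmld_reduces_to_qmepd {m n : ℕ}
    (H : Matrix (Fin m) (Fin n ⊕ Fin n) (ZMod 2))
    (hO : ∀ i j, H i (Sum.inr j) = 0)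
    (hfull : LinearIndependent (ZMod 2) (fun i : Fin m => H i))
    (s : Fin m → ZMod 2) (ε : ℝ)
    (hε0 : 0 < ε) (hε1 : ε ≤ 3 / 4)
    (hεm : ε / 3 / (1 - ε) < ((2 : ℝ) ^ m)⁻¹)
    (x z : Fin n → ZMod 2)
    (hv : syndrome H (Sum.elim x z) = s)
    (hmax : ∀ w : Fin n ⊕ Fin n → ZMod 2, syndrome H w = s →
      alpha H ε w ≤ alpha H ε (Sum.elim x z)) :
    syndrome H (Sum.elim (0 : Fin n → ZMod 2) z) = s ∧
    gwFull (Sum.elim (0 : Fin n → ZMod 2) z) =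
      sInf (gwFull '' {u : Fin n ⊕ Fin n → ZMod 2 | syndrome H u = s}) := by
  have hb : (0:ℝ) < 1 - ε := by linarith
  have ha : (0:ℝ) < ε / 3 := by linarith
  set ρ : ℝ := ε / 3 / (1 - ε) with hρ
  have hρ0 : 0 < ρ := div_pos ha hb
  have hpm : (0:ℝ) < 2 ^ m := by positivity
  have hρm : (2:ℝ) ^ m * ρ < 1 := by
    rw [← lt_div_iff₀' hpm, one_div]; exact hεm
  have hρ1 : ρ ≤ 1 := by
    have h2 : ((2:ℝ) ^ m)⁻¹ ≤ 1 := by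
      rw [inv_le_one_iff₀]; right; exact one_le_pow₀ one_le_two
    linarith
  -- rewriting of terms
  have term_eq : ∀ t : ℕ, t ≤ n →
      (ε / 3) ^ t * (1 - ε) ^ (n - t) = (1 - ε) ^ n * ρ ^ t := by
    intro t ht
    have hbt : (1 - ε) ^ t ≠ 0 := pow_ne_zero _ (ne_of_gt hb)
    have h := pow_sub₀ (1 - ε) (ne_of_gt hb) ht
    rw [h, hρ]
    field_simp
    rw [← mul_pow]
    congr 1
    field_simp
  have hs0 : syndrome H (Sum.elim (0 : Fin n → ZMod 2) z) = s := by
    rw [← hv]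
    exact syndrome_eq_of_inr H hO _ _ (fun j => rfl)
  refine ⟨hs0, ?_⟩
  -- lower bound: hammingNorm z ≤ gwFull u for every solution u
  have key : ∀ u : Fin n ⊕ Fin n → ZMod 2, syndrome H u = s →
      hammingNorm z ≤ gwFull u := by
    intro u hu
    set z' : Fin n → ZMod 2 := fun j => u (Sum.inr j) with hz'
    have hgz' : hammingNorm z' ≤ gwFull u := gw_ge _ _
    by_contra hcon
    push_neg at hcon
    have hd : hammingNorm z' < hammingNorm z := by omega
    set d := hammingNorm z' with hdd
    have hs' : syndrome H (Sum.elim (0 : Fin n → ZMod 2) z') = s := by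
      rw [← hu]
      exact syndrome_eq_of_inr H hO _ _ (fun j => rfl)
    have hdn : d + 1 ≤ n := by
      have := gw_le x z
      have : hammingNorm z ≤ gw x z := gw_ge x z
      have h2 : gw x z ≤ n := gw_le x z
      omega
    -- lower bound on alpha of (0|z')
    have hlow : (1 - ε) ^ n * ρ ^ d ≤ alpha H ε (Sum.elim 0 z') := by
      have hmem := self_mem_coset H (Sum.elim (0 : Fin n → ZMod 2) z')
      have h1 : (ε / 3) ^ gwFull (Sum.elim (0 : Fin n → ZMod 2) z') *
          (1 - ε) ^ (n - gwFull (Sum.elim (0 : Fin n → ZMod 2) z')) ≤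
          ∑ u ∈ cosetF H (Sum.elim (0 : Fin n → ZMod 2) z'),
            (ε / 3) ^ gwFull u * (1 - ε) ^ (n - gwFull u) :=
        Finset.single_le_sum
          (f := fun u => (ε / 3) ^ gwFull u * (1 - ε) ^ (n - gwFull u))
          (fun u _ => by positivity) hmem
      rw [gwFull_zero_left, ← hdd, term_eq d (by omega)] at h1
      unfold alpha
      exact h1
    -- upper bound on alpha of (x|z)
    have hup : alpha H ε (Sum.elim x z) ≤ (2:ℝ) ^ m * ((1 - ε) ^ n * ρ ^ (d + 1)) := by
      have hbound : ∀ u' ∈ cosetF H (Sum.elim x z),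
          (ε / 3) ^ gwFull u' * (1 - ε) ^ (n - gwFull u') ≤ (1 - ε) ^ n * ρ ^ (d + 1) := by
        intro u' hu'
        have hzpart : ∀ j, u' (Sum.inr j) = z j := fun j => mem_coset_inr hO hu' j
        have h1 : hammingNorm z ≤ gwFull u' := by
          unfold gwFull
          rw [show (fun j => u' (Sum.inr j)) = z from funext hzpart]
          exact le_trans le_rfl (gw_ge _ _)
        have h2 : gwFull u' ≤ n := gw_le _ _
        rw [term_eq _ h2]
        apply mul_le_mul_of_nonneg_left _ (by positivity)
        exact pow_le_pow_of_le_one hρ0.le hρ1 (by omega)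
      unfold alpha
      calc ∑ u ∈ cosetF H (Sum.elim x z), (ε / 3) ^ gwFull u * (1 - ε) ^ (n - gwFull u)
          ≤ (cosetF H (Sum.elim x z)).card • ((1 - ε) ^ n * ρ ^ (d + 1)) :=
            Finset.sum_le_card_nsmul _ _ _ hbound
        _ ≤ (2:ℝ) ^ m * ((1 - ε) ^ n * ρ ^ (d + 1)) := by
            rw [nsmul_eq_mul]
            apply mul_le_mul_of_nonneg_right _ (by positivity)
            have : (cosetF H (Sum.elim x z)).card ≤ 2 ^ m := by
              calc (cosetF H (Sum.elim x z)).card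
                  ≤ (Finset.univ : Finset (Fin m → ZMod 2)).card := Finset.card_image_le
                _ = 2 ^ m := by simp [Finset.card_univ]
            exact_mod_cast Nat.cast_le.mpr this
    have hstrict : (2:ℝ) ^ m * ((1 - ε) ^ n * ρ ^ (d + 1)) < (1 - ε) ^ n * ρ ^ d := by
      have : (2:ℝ) ^ m * ((1 - ε) ^ n * ρ ^ (d + 1)) =
          ((2:ℝ) ^ m * ρ) * ((1 - ε) ^ n * ρ ^ d) := by ring
      rw [this]
      have hpos : (0:ℝ) < (1 - ε) ^ n * ρ ^ d := by positivity
      nlinarith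
    have := hmax (Sum.elim 0 z') hs'
    linarith
  have hTmem : gwFull (Sum.elim (0 : Fin n → ZMod 2) z) ∈
      gwFull '' {u : Fin n ⊕ Fin n → ZMod 2 | syndrome H u = s} :=
    ⟨Sum.elim 0 z, hs0, rfl⟩
  refine le_antisymm (le_csInf ⟨_, hTmem⟩ ?_) (Nat.sInf_le hTmem)
  rintro b ⟨u, hu, rfl⟩
  rw [gwFull_zero_left]
  exact key u hu
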